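/- For all real numbers a and b, the set of complex solutions z of conj(z)^4 = z^2 + a*z + b is finite, and its cardinality is at least 4 and at most 10. -/

import Mathlib

/-
  Proof that for all real a, b the harmonic polynomial equation
  conj(z)^4 = z^2 + a z + b has between 4 and 10 solutions.
  Strategy: decompose solutions into real solutions (roots of a quartic),
  nonreal solutions with x ≠ 0 (parametrized by roots of a sextic Pf with a
  sign condition), and solutions on the imaginary axis. Counting bounds come
  from polynomial root bounds, Rolle's theorem and explicit IVT arguments.
-/

noncomputable section
namespace Stmt12
open Polynomial

@[simp] lemma mk_re (x y : ℝ) : (⟨x,y⟩:ℂ).re = x := rfl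
@[simp] lemma mk_im (x y : ℝ) : (⟨x,y⟩:ℂ).im = y := rfl



def sol (a b : ℝ) : Set ℂ := {z : ℂ | (starRingEnd ℂ z) ^ 4 = z ^ 2 + (a : ℂ) * z + (b : ℂ)}

/-- membership in real/imaginary parts -/
lemma mem_sol_iff (a b : ℝ) (z : ℂ) :
    z ∈ sol a b ↔
      (z.re^4 - 6*z.re^2*z.im^2 + z.im^4 = z.re^2 - z.im^2 + a*z.re + b ∧
       -4*z.re^3*z.im + 4*z.re*z.im^3 = 2*z.re*z.im + a*z.im) := by
  simp only [sol, Set.mem_setOf_eq, Complex.ext_iff]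
  constructor
  · rintro ⟨h1, h2⟩
    constructor
    · simp [pow_succ, Complex.mul_re, Complex.mul_im, Complex.add_re, Complex.add_im,
        Complex.ofReal_re, Complex.ofReal_im, Complex.conj_re, Complex.conj_im] at h1
      nlinarith [h1]
    · simp [pow_succ, Complex.mul_re, Complex.mul_im, Complex.add_re, Complex.add_im,
        Complex.ofReal_re, Complex.ofReal_im, Complex.conj_re, Complex.conj_im] at h2
      nlinarith [h2]
  · rintro ⟨h1, h2⟩
    constructor
    · simp [pow_succ, Complex.mul_re, Complex.mul_im, Complex.add_re, Complex.add_im,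
        Complex.ofReal_re, Complex.ofReal_im, Complex.conj_re, Complex.conj_im]
      nlinarith [h1]
    · simp [pow_succ, Complex.mul_re, Complex.mul_im, Complex.add_re, Complex.add_im,
        Complex.ofReal_re, Complex.ofReal_im, Complex.conj_re, Complex.conj_im]
      nlinarith [h2]

def Pf (a b x : ℝ) : ℝ := -64*x^6 - 32*x^4 - 32*a*x^3 + (12-16*b)*x^2 + 8*a*x + a^2
def gf (a x : ℝ) : ℝ := 4*x^3 + 2*x + a
def tf (a x : ℝ) : ℝ := (4*x^3 + 2*x + a)/(4*x)

def Rset (a b : ℝ) : Set ℝ := {x | x^4 - x^2 - a*x - b = 0}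
def Xset (a b : ℝ) : Set ℝ := {x | Pf a b x = 0 ∧ 0 < x * gf a x}
def Vset (a b : ℝ) : Set ℝ := {y | y ≠ 0 ∧ a = 0 ∧ y^4 + y^2 - b = 0}

lemma Pf_eq_zero {a b x y : ℝ} (h1 : x^4 - 6*x^2*y^2 + y^4 = x^2 - y^2 + a*x + b)
    (hIm : 4*x*y^2 = 4*x^3 + 2*x + a) : Pf a b x = 0 := by
  unfold Pf
  linear_combination (16*x^2) * h1 - (-20*x^3+6*x+a+4*x*y^2) * hIm

lemma re_eq_of_Pf {a b x y : ℝ} (hx : x ≠ 0) (hP : Pf a b x = 0)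
    (hIm : 4*x*y^2 = 4*x^3 + 2*x + a) :
    x^4 - 6*x^2*y^2 + y^4 = x^2 - y^2 + a*x + b := by
  have h16 : (16*x^2 : ℝ) ≠ 0 := by positivity
  apply mul_left_cancel₀ h16
  unfold Pf at hP
  linear_combination hP + (-20*x^3+6*x+a+4*x*y^2) * hIm

lemma mem_sol_of_X {a b x : ℝ} (hx : x ∈ Xset a b) :
    (⟨x, Real.sqrt (tf a x)⟩ : ℂ) ∈ sol a b ∧ (⟨x, -Real.sqrt (tf a x)⟩ : ℂ) ∈ sol a b ∧
    0 < Real.sqrt (tf a x) ∧ x ≠ 0 := by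
  obtain ⟨hP, hpos⟩ := hx
  have hx0 : x ≠ 0 := by rintro rfl; simp [gf] at hpos
  have ht : 0 < tf a x := by
    have h : tf a x = (x * gf a x) / (4*x^2) := by
      rw [tf, div_eq_div_iff (by positivity) (by positivity)]; unfold gf; ring
    rw [h]; positivity
  have hy2 : (Real.sqrt (tf a x))^2 = tf a x := Real.sq_sqrt ht.le
  have hIm : 4*x*(Real.sqrt (tf a x))^2 = 4*x^3 + 2*x + a := by
    rw [hy2, tf]; field_simp
  have hRe := re_eq_of_Pf (y := Real.sqrt (tf a x)) hx0 hP hIm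
  refine ⟨?_, ?_, Real.sqrt_pos.2 ht, hx0⟩
  · rw [mem_sol_iff]
    refine ⟨by simpa using hRe, ?_⟩
    simp only [mk_re, mk_im]
    linear_combination (Real.sqrt (tf a x)) * hIm
  · rw [mem_sol_iff]
    constructor
    · simp only [mk_re, mk_im]
      linear_combination hRe
    · simp only [mk_re, mk_im]
      linear_combination (-Real.sqrt (tf a x)) * hIm

lemma mem_sol_of_R {a b x : ℝ} (hx : x ∈ Rset a b) : ((x:ℝ) : ℂ) ∈ sol a b := by
  rw [mem_sol_iff]
  simp only [Complex.ofReal_re, Complex.ofReal_im]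
  have h := hx
  simp only [Rset, Set.mem_setOf_eq] at h
  exact ⟨by linear_combination h, by ring⟩

lemma mem_sol_of_V {a b y : ℝ} (hy : y ∈ Vset a b) : (⟨0, y⟩ : ℂ) ∈ sol a b := by
  obtain ⟨hy0, ha, hb⟩ := hy
  rw [mem_sol_iff]
  simp only [mk_re, mk_im]
  exact ⟨by linear_combination hb, by rw [ha]; ring⟩

lemma sol_subset (a b : ℝ) :
    sol a b ⊆ ((fun x : ℝ => (x:ℂ)) '' Rset a b) ∪
      ((fun x : ℝ => (⟨x, Real.sqrt (tf a x)⟩ : ℂ)) '' Xset a b) ∪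
      ((fun x : ℝ => (⟨x, -Real.sqrt (tf a x)⟩ : ℂ)) '' Xset a b) ∪
      ((fun y : ℝ => (⟨0, y⟩ : ℂ)) '' Vset a b) := by
  intro z hz
  rw [mem_sol_iff] at hz
  obtain ⟨x, y⟩ := z
  simp only [mk_re, mk_im] at hz
  obtain ⟨h1, h2⟩ := hz
  by_cases hy : y = 0
  · left; left; left
    refine ⟨x, ?_, by subst hy; apply Complex.ext <;> simp⟩
    simp only [Rset, Set.mem_setOf_eq]
    subst hy
    linear_combination h1
  by_cases hx : x = 0
  · right
    refine ⟨y, ⟨hy, ?_, ?_⟩, by subst hx; rfl⟩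
    · have h : a * y = 0 := by subst hx; linear_combination -h2
      rcases mul_eq_zero.1 h with h | h
      · exact h
      · exact absurd h hy
    · subst hx; linear_combination h1
  · have hIm : 4*x*y^2 = 4*x^3 + 2*x + a := by
      have hfac : y * (4*x*y^2 - (4*x^3 + 2*x + a)) = 0 := by linear_combination h2
      rcases mul_eq_zero.1 hfac with h | h
      · exact absurd h hy
      · linarith [h]
    have hP : Pf a b x = 0 := Pf_eq_zero h1 hIm
    have hpos : 0 < x * gf a x := by
      have h : x * gf a x = 4*x^2*y^2 := by rw [gf, ← hIm]; ring
      rw [h]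
      positivity
    have hXmem : x ∈ Xset a b := ⟨hP, hpos⟩
    have ht : 0 < tf a x := by
      have h : tf a x = (x * gf a x) / (4*x^2) := by
        rw [tf, div_eq_div_iff (by positivity) (by positivity)]; unfold gf; ring
      rw [h]; positivity
    have hy2 : y^2 = tf a x := by
      rw [tf]
      rw [eq_div_iff (by simpa using hx : (4*x:ℝ) ≠ 0)]
      linarith [hIm]
    have habs : Real.sqrt (tf a x) = |y| := by
      rw [← hy2, Real.sqrt_sq_eq_abs]
    rcases abs_cases y with ⟨hc, _⟩ | ⟨hc, _⟩
    · left; left; right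
      exact ⟨x, hXmem, by apply Complex.ext <;> simp [habs, hc]⟩
    · left; right
      refine ⟨x, hXmem, by apply Complex.ext <;> simp [habs, hc]⟩

def p6 (a b : ℝ) : ℝ[X] := C (-64)*X^6 + C (-32)*X^4 + C (-32*a)*X^3 + C (12-16*b)*X^2 + C (8*a)*X + C (a^2)
def p4 (a b : ℝ) : ℝ[X] := X^4 - X^2 - C a*X - C b

lemma p6_eval (a b x : ℝ) : (p6 a b).eval x = Pf a b x := by
  simp [p6, Pf]; ring

lemma p6_natDegree (a b : ℝ) : (p6 a b).natDegree = 6 := by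
  unfold p6
  compute_degree!

lemma p6_ne (a b : ℝ) : p6 a b ≠ 0 := by
  intro h
  have := p6_natDegree a b
  rw [h] at this
  simp at this

lemma Pf_root_finite (a b : ℝ) : {x : ℝ | Pf a b x = 0}.Finite := by
  have : {x : ℝ | Pf a b x = 0} = {x : ℝ | (p6 a b).IsRoot x} := by
    ext x; simp [IsRoot, p6_eval]
  rw [this]
  exact (p6 a b).finite_setOf_isRoot (p6_ne a b)

lemma Xset_finite (a b : ℝ) : (Xset a b).Finite :=
  (Pf_root_finite a b).subset (fun x hx => hx.1)

lemma p4_eval (a b x : ℝ) : (p4 a b).eval x = x^4 - x^2 - a*x - b := by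
  simp [p4]

lemma p4_natDegree (a b : ℝ) : (p4 a b).natDegree = 4 := by
  unfold p4
  compute_degree!

lemma p4_ne (a b : ℝ) : p4 a b ≠ 0 := by
  intro h
  have := p4_natDegree a b
  rw [h] at this
  simp at this

lemma Rset_eq (a b : ℝ) : Rset a b = ((p4 a b).roots.toFinset : Set ℝ) := by
  ext x
  simp only [Rset, Set.mem_setOf_eq, Finset.coe_sort_coe, Multiset.mem_toFinset,
    Finset.mem_coe, mem_roots (p4_ne a b), IsRoot, p4_eval]

lemma Rset_finite (a b : ℝ) : (Rset a b).Finite := by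
  rw [Rset_eq]; exact (Multiset.toFinset _).finite_toSet

lemma Rset_ncard (a b : ℝ) : (Rset a b).ncard ≤ 4 := by
  rw [Rset_eq, Set.ncard_coe_finset]
  calc ((p4 a b).roots.toFinset).card ≤ Multiset.card (p4 a b).roots :=
        (p4 a b).roots.toFinset_card_le
    _ ≤ (p4 a b).natDegree := (p4 a b).card_roots'
    _ = 4 := p4_natDegree a b

def Bf (a b x : ℝ) : ℝ := Pf a b x / (16*x^2)
def Mf (a x : ℝ) : ℝ := -256*x^6 - 64*x^4 - 32*a*x^3 - 8*a*x - 2*a^2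
def B1 (a x : ℝ) : ℝ := Mf a x / (16*x^3)
def Kf (a x : ℝ) : ℝ := -768*x^6 - 64*x^4 + 16*a*x + 6*a^2

lemma hasDerivAt_poly6 (c6 c4 c3 c2 c1 c0 x : ℝ) :
    HasDerivAt (fun x : ℝ => c6*x^6 + c4*x^4 + c3*x^3 + c2*x^2 + c1*x + c0)
      (6*c6*x^5 + 4*c4*x^3 + 3*c3*x^2 + 2*c2*x + c1) x := by
  have h6 : HasDerivAt (fun x : ℝ => x^6) (6*x^5) x := by simpa using hasDerivAt_pow 6 x
  have h4 : HasDerivAt (fun x : ℝ => x^4) (4*x^3) x := by simpa using hasDerivAt_pow 4 x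
  have h3 : HasDerivAt (fun x : ℝ => x^3) (3*x^2) x := by simpa using hasDerivAt_pow 3 x
  have h2 : HasDerivAt (fun x : ℝ => x^2) (2*x) x := by simpa using hasDerivAt_pow 2 x
  have h1 : HasDerivAt (fun x : ℝ => x) 1 x := hasDerivAt_id x
  have := ((((((h6.const_mul c6).add (h4.const_mul c4)).add (h3.const_mul c3)).add
      (h2.const_mul c2)).add (h1.const_mul c1)).add_const c0)
  refine this.congr_deriv ?_
  ring

lemma hasDerivAt_Bf (a b : ℝ) {x : ℝ} (hx : x ≠ 0) :
    HasDerivAt (Bf a b) (B1 a x) x := by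
  have hnum : HasDerivAt (fun x => Pf a b x)
      (6*(-64)*x^5 + 4*(-32)*x^3 + 3*(-32*a)*x^2 + 2*(12-16*b)*x + 8*a) x := by
    have := hasDerivAt_poly6 (-64) (-32) (-32*a) (12-16*b) (8*a) (a^2) x
    convert this using 2 <;> unfold Pf <;> ring
  have hden : HasDerivAt (fun x : ℝ => 16*x^2) (16*(2*x)) x := by
    simpa using ((hasDerivAt_pow 2 x).const_mul (16:ℝ))
  have hd0 : (16*x^2 : ℝ) ≠ 0 := by positivity
  have := hnum.div hden hd0
  refine this.congr_deriv ?_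
  unfold B1 Mf Pf
  field_simp
  ring

lemma hasDerivAt_B1 (a : ℝ) {x : ℝ} (hx : x ≠ 0) :
    HasDerivAt (B1 a) (Kf a x / (16*x^4)) x := by
  have hnum : HasDerivAt (fun x => Mf a x)
      (6*(-256)*x^5 + 4*(-64)*x^3 + 3*(-32*a)*x^2 + 2*0*x + (-8*a)) x := by
    have := hasDerivAt_poly6 (-256) (-64) (-32*a) 0 (-8*a) (-2*a^2) x
    convert this using 2 <;> unfold Mf <;> ring
  have hden : HasDerivAt (fun x : ℝ => 16*x^3) (16*(3*x^2)) x := by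
    simpa using ((hasDerivAt_pow 3 x).const_mul (16:ℝ))
  have hd0 : (16*x^3 : ℝ) ≠ 0 := by
    simp only [ne_eq, mul_eq_zero]
    push_neg
    exact ⟨by norm_num, pow_ne_zero 3 hx⟩
  have := hnum.div hden hd0
  refine this.congr_deriv ?_
  unfold Kf Mf
  field_simp
  ring

/-- Rolle for Pf roots avoiding 0: gives root of Mf strictly between. -/
lemma rolle_Pf {a b x₁ x₂ : ℝ} (h12 : x₁ < x₂) (h0 : ∀ x ∈ Set.Icc x₁ x₂, x ≠ 0)
    (hp1 : Pf a b x₁ = 0) (hp2 : Pf a b x₂ = 0) :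
    ∃ ξ ∈ Set.Ioo x₁ x₂, Mf a ξ = 0 := by
  have hBeq : Bf a b x₁ = Bf a b x₂ := by
    unfold Bf; rw [hp1, hp2]; simp
  have hcont : ContinuousOn (Bf a b) (Set.Icc x₁ x₂) := fun x hxm =>
    (hasDerivAt_Bf a b (h0 x hxm)).continuousAt.continuousWithinAt
  have hderiv : ∀ x ∈ Set.Ioo x₁ x₂, HasDerivAt (Bf a b) (B1 a x) x := fun x hxm =>
    hasDerivAt_Bf a b (h0 x (Set.mem_Icc_of_Ioo hxm))
  obtain ⟨ξ, hξm, hξ⟩ := exists_hasDerivAt_eq_zero h12 hcont hBeq hderiv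
  refine ⟨ξ, hξm, ?_⟩
  have hξ0 : ξ ≠ 0 := h0 ξ (Set.mem_Icc_of_Ioo hξm)
  have : Mf a ξ / (16*ξ^3) = 0 := hξ
  field_simp at this
  simpa using this

lemma rolle_Mf {a x₁ x₂ : ℝ} (h12 : x₁ < x₂) (h0 : ∀ x ∈ Set.Icc x₁ x₂, x ≠ 0)
    (hp1 : Mf a x₁ = 0) (hp2 : Mf a x₂ = 0) :
    ∃ ξ ∈ Set.Ioo x₁ x₂, Kf a ξ = 0 := by
  have hBeq : B1 a x₁ = B1 a x₂ := by
    unfold B1; rw [hp1, hp2]; simp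
  have hcont : ContinuousOn (B1 a) (Set.Icc x₁ x₂) := fun x hxm =>
    (hasDerivAt_B1 a (h0 x hxm)).continuousAt.continuousWithinAt
  have hderiv : ∀ x ∈ Set.Ioo x₁ x₂, HasDerivAt (B1 a) (Kf a x / (16*x^4)) x := fun x hxm =>
    hasDerivAt_B1 a (h0 x (Set.mem_Icc_of_Ioo hxm))
  obtain ⟨ξ, hξm, hξ⟩ := exists_hasDerivAt_eq_zero h12 hcont hBeq hderiv
  refine ⟨ξ, hξm, ?_⟩
  have hξ0 : ξ ≠ 0 := h0 ξ (Set.mem_Icc_of_Ioo hξm)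
  have : Kf a ξ / (16*ξ^4) = 0 := hξ
  field_simp at this
  simpa using this

lemma Mf_neg {a x : ℝ} (ha : a ≤ 0) (hx : x < 0) : Mf a x < 0 := by
  unfold Mf
  nlinarith [mul_nonneg (neg_nonneg.2 ha) (pow_pos (neg_pos.2 hx) 3).le,
    mul_nonneg (neg_nonneg.2 ha) (neg_pos.2 hx).le,
    pow_pos (neg_pos.2 hx) 4, sq_nonneg a, pow_pos (neg_pos.2 hx) 6]

lemma Kf_neg {a ρ x : ℝ} (hρ : 0 < ρ) (hg : gf a ρ = 0) (hx : ρ ≤ x) : Kf a x < 0 := by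
  have ha : a = -(4*ρ^3+2*ρ) := by unfold gf at hg; linarith
  subst ha
  unfold Kf
  have h6 : ρ^6 ≤ x^6 := pow_le_pow_left₀ hρ.le hx 6
  have h4 : ρ^4 ≤ x^4 := pow_le_pow_left₀ hρ.le hx 4
  have h1 : ρ*ρ ≤ ρ*x := by nlinarith
  have h3 : ρ^3*ρ ≤ ρ^3*x := by nlinarith [pow_pos hρ 3]
  nlinarith [pow_pos hρ 6, pow_pos hρ 4, pow_pos hρ 2]

lemma exists_rho {a : ℝ} (ha : a < 0) : ∃ ρ, 0 < ρ ∧ ρ < -a ∧ gf a ρ = 0 := by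
  have hcont : ContinuousOn (gf a) (Set.Icc 0 (-a)) := by
    apply Continuous.continuousOn
    unfold gf
    continuity
  have h0a : (0:ℝ) ≤ -a := by linarith
  have hmem : (0:ℝ) ∈ Set.Ioo (gf a 0) (gf a (-a)) := by
    constructor
    · simp [gf]; linarith
    · simp only [gf]
      nlinarith [sq_nonneg a]
  obtain ⟨ρ, hρm, hρ⟩ := intermediate_value_Ioo h0a hcont hmem
  exact ⟨ρ, hρm.1, hρm.2, hρ⟩

lemma Xset_cases {a b ρ x : ℝ} (hρ : 0 < ρ) (hg : gf a ρ = 0) (hx : x ∈ Xset a b) :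
    x < 0 ∨ ρ < x := by
  by_contra h
  push_neg at h
  obtain ⟨h1, h2⟩ := h
  have hprod := hx.2
  -- 0 ≤ x ≤ ρ
  have hgx : gf a x ≤ 0 := by
    unfold gf at hg ⊢
    have hc : 0 ≤ (ρ - x) * (ρ^2 + ρ*x + x^2) := by
      apply mul_nonneg (by linarith)
      nlinarith [sq_nonneg (ρ+x), sq_nonneg x, sq_nonneg ρ]
    nlinarith [hc]
  nlinarith [hprod, mul_nonneg h1 (neg_nonneg.2 hgx)]

/-- at most one element of Xset is negative -/
lemma Xneg_subsingleton {a b : ℝ} (ha : a ≤ 0) {x₁ x₂ : ℝ}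
    (h1 : x₁ ∈ Xset a b) (h2 : x₂ ∈ Xset a b) (hn1 : x₁ < 0) (hn2 : x₂ < 0) : x₁ = x₂ := by
  rcases lt_trichotomy x₁ x₂ with h | h | h
  · obtain ⟨ξ, hξm, hξ⟩ := rolle_Pf h (fun x hx => by
      have := hx.2; intro h0; subst h0; linarith) h1.1 h2.1
    exact absurd hξ (Mf_neg ha (lt_of_le_of_lt hξm.2.le hn2)).ne
  · exact h
  · obtain ⟨ξ, hξm, hξ⟩ := rolle_Pf h (fun x hx => by
      have := hx.2; intro h0; subst h0; linarith) h2.1 h1.1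
    exact absurd hξ (Mf_neg ha (lt_of_le_of_lt hξm.2.le hn1)).ne

/-- no three elements of Xset exceed ρ -/
lemma Xpos_no_three {a b ρ x₁ x₂ x₃ : ℝ} (hρ : 0 < ρ) (hg : gf a ρ = 0)
    (h1 : x₁ ∈ Xset a b) (h2 : x₂ ∈ Xset a b) (h3 : x₃ ∈ Xset a b)
    (hr1 : ρ < x₁) (hr2 : ρ < x₂) (hr3 : ρ < x₃)
    (h12 : x₁ < x₂) (h23 : x₂ < x₃) : False := by
  have hne : ∀ x₁' x₂' : ℝ, ρ < x₁' → x₁' < x₂' → ∀ x ∈ Set.Icc x₁' x₂', x ≠ 0 := by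
    intro x₁' x₂' ha' hb' x hx h0
    subst h0
    have := hx.1
    linarith
  obtain ⟨ξ₁, hξ₁m, hξ₁⟩ := rolle_Pf h12 (hne _ _ hr1 h12) h1.1 h2.1
  obtain ⟨ξ₂, hξ₂m, hξ₂⟩ := rolle_Pf h23 (hne _ _ hr2 h23) h2.1 h3.1
  have hle : ξ₁ < ξ₂ := lt_trans hξ₁m.2 hξ₂m.1
  have hρξ : ρ < ξ₁ := lt_trans hr1 hξ₁m.1
  obtain ⟨ζ, hζm, hζ⟩ := rolle_Mf hle (fun x hx h0 => by
    subst h0; have := hx.1; linarith) hξ₁ hξ₂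
  exact absurd hζ (Kf_neg hρ hg (le_of_lt (lt_trans hρξ hζm.1))).ne

/-- the main X-counting bound for a < 0 -/
lemma Xset_ncard_le_three {a b ρ : ℝ} (ha : a < 0) (hρ : 0 < ρ) (hg : gf a ρ = 0) :
    (Xset a b).ncard ≤ 3 := by
  have hfin := Xset_finite a b
  have hsplit : Xset a b ⊆ (Xset a b ∩ Set.Iio 0) ∪ (Xset a b ∩ Set.Ioi ρ) := by
    intro x hx
    rcases Xset_cases hρ hg hx with h | h
    · exact Or.inl ⟨hx, h⟩
    · exact Or.inr ⟨hx, h⟩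
  have hneg : (Xset a b ∩ Set.Iio 0).ncard ≤ 1 := by
    rw [Set.ncard_le_one_iff (hfin.subset Set.inter_subset_left)]
    rintro x y ⟨hx, hx0⟩ ⟨hy, hy0⟩
    exact Xneg_subsingleton ha.le hx hy hx0 hy0
  have hpos : (Xset a b ∩ Set.Ioi ρ).ncard ≤ 2 := by
    by_contra h
    push_neg at h
    have h2 := (Set.two_lt_ncard_iff (hfin.subset Set.inter_subset_left)).1 h
    obtain ⟨x, y, z, ⟨hx, hx'⟩, ⟨hy, hy'⟩, ⟨hz, hz'⟩, hxy, hxz, hyz⟩ := h2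
    -- sort x y z
    rcases lt_trichotomy x y with h1 | h1 | h1
    · rcases lt_trichotomy y z with h2' | h2' | h2'
      · exact Xpos_no_three hρ hg hx hy hz hx' hy' hz' h1 h2'
      · exact hyz h2'
      · rcases lt_trichotomy x z with h3' | h3' | h3'
        · exact Xpos_no_three hρ hg hx hz hy hx' hz' hy' h3' h2'
        · exact hxz h3'
        · exact Xpos_no_three hρ hg hz hx hy hz' hx' hy' h3' h1
    · exact hxy h1
    · rcases lt_trichotomy x z with h2' | h2' | h2'
      · exact Xpos_no_three hρ hg hy hx hz hy' hx' hz' h1 h2'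
      · exact hxz h2'
      · rcases lt_trichotomy y z with h3' | h3' | h3'
        · exact Xpos_no_three hρ hg hy hz hx hy' hz' hx' h3' h2'
        · exact hyz h3'
        · exact Xpos_no_three hρ hg hz hy hx hz' hy' hx' h3' h1
  calc (Xset a b).ncard ≤ ((Xset a b ∩ Set.Iio 0) ∪ (Xset a b ∩ Set.Ioi ρ)).ncard :=
        Set.ncard_le_ncard hsplit ((hfin.subset Set.inter_subset_left).union
          (hfin.subset Set.inter_subset_left))
    _ ≤ (Xset a b ∩ Set.Iio 0).ncard + (Xset a b ∩ Set.Ioi ρ).ncard := Set.ncard_union_le _ _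
    _ ≤ 3 := by omega

lemma Pf_continuous (a b : ℝ) : Continuous (Pf a b) := by
  unfold Pf; continuity

lemma Pf_neg_big_pos {a b x : ℝ} (hx : 2 + |a| + |b| ≤ x) : Pf a b x < 0 := by
  have ha1 : a ≤ x := le_trans (le_abs_self a) (by linarith [abs_nonneg b])
  have ha2 : -x ≤ a := by linarith [neg_abs_le a, abs_nonneg b]
  have hb1 : b ≤ x := le_trans (le_abs_self b) (by linarith [abs_nonneg a])
  have hb2 : -x ≤ b := by linarith [neg_abs_le b, abs_nonneg a]
  have hx2 : 2 ≤ x := by linarith [abs_nonneg a, abs_nonneg b]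
  have hx0 : (0:ℝ) ≤ x := by linarith
  have tA : (-a)*x^3 ≤ x*x^3 := mul_le_mul_of_nonneg_right (by linarith) (by positivity)
  have tB : (-b)*x^2 ≤ x*x^2 := mul_le_mul_of_nonneg_right (by linarith) (by positivity)
  have tC : a*x ≤ x*x := mul_le_mul_of_nonneg_right ha1 hx0
  have tD : a^2 ≤ x^2 := sq_le_sq' ha2 ha1
  have h8 : (8:ℝ) ≤ x^3 := by nlinarith
  have h64 : 512*x^3 ≤ 64*x^6 := by nlinarith [mul_le_mul_of_nonneg_right h8 (by positivity : (0:ℝ) ≤ x^3)]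
  have h32 : x^2 ≤ x^3 := by nlinarith
  unfold Pf
  nlinarith [tA, tB, tC, tD, h8, h64, h32]

lemma Pf_neg_big {a b x : ℝ} (hx : 2 + |a| + |b| ≤ |x|) : Pf a b x < 0 := by
  rcases le_or_gt 0 x with h | h
  · exact Pf_neg_big_pos (by rwa [abs_of_nonneg h] at hx)
  · have heq : Pf a b x = Pf (-a) b (-x) := by unfold Pf; ring
    rw [heq]
    apply Pf_neg_big_pos
    rw [abs_of_neg h] at hx
    rw [abs_neg]
    linarith

lemma qf_pos_big_pos {a b x : ℝ} (hx : 2 + |a| + |b| ≤ x) : 0 < x^4 - x^2 - a*x - b := by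
  have ha1 : a ≤ x := le_trans (le_abs_self a) (by linarith [abs_nonneg b])
  have ha2 : -x ≤ a := by linarith [neg_abs_le a, abs_nonneg b]
  have hb1 : b ≤ x := le_trans (le_abs_self b) (by linarith [abs_nonneg a])
  have hx2 : 2 ≤ x := by linarith [abs_nonneg a, abs_nonneg b]
  have hx0 : (0:ℝ) ≤ x := by linarith
  have tC : (-a)*x ≤ x*x := mul_le_mul_of_nonneg_right (by linarith) hx0
  nlinarith [tC, sq_nonneg x, sq_nonneg (x^2-2)]

lemma qf_pos_big {a b x : ℝ} (hx : 2 + |a| + |b| ≤ |x|) : 0 < x^4 - x^2 - a*x - b := by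
  rcases le_or_gt 0 x with h | h
  · exact qf_pos_big_pos (by rwa [abs_of_nonneg h] at hx)
  · have heq : x^4 - x^2 - a*x - b = (-x)^4 - (-x)^2 - (-a)*(-x) - b := by ring
    rw [heq]
    apply qf_pos_big_pos
    rw [abs_of_neg h] at hx
    rw [abs_neg]
    linarith

/-- for a < 0 there is always a negative element of Xset -/
lemma exists_Xneg {a b : ℝ} (ha : a < 0) : ∃ x ∈ Xset a b, x < 0 := by
  set M := 2 + |a| + |b| with hMdef
  have hMpos : 0 < M := by have := abs_nonneg a; have := abs_nonneg b; linarith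
  have h0 : Pf a b 0 = a^2 := by unfold Pf; ring
  have hPM : Pf a b (-M) < 0 := Pf_neg_big (by rw [abs_neg, abs_of_pos hMpos])
  have hmem : (0:ℝ) ∈ Set.Ioo (Pf a b (-M)) (Pf a b 0) := by
    refine ⟨hPM, ?_⟩
    rw [h0]
    have : a ≠ 0 := ha.ne
    positivity
  obtain ⟨x, hxm, hx⟩ := intermediate_value_Ioo (by linarith : -M ≤ (0:ℝ))
    ((Pf_continuous a b).continuousOn) hmem
  refine ⟨x, ⟨hx, ?_⟩, hxm.2⟩
  have hx0 : x < 0 := hxm.2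
  have hx2 : 0 < x^2 := pow_pos (abs_pos.2 hx0.ne) 2 |>.trans_eq (by rw [← abs_pow]; exact abs_of_nonneg (by positivity))
  have hx3 : x^3 < 0 := by nlinarith
  have hgx : gf a x < 0 := by unfold gf; nlinarith
  nlinarith [mul_pos (neg_pos.2 hx0) (neg_pos.2 hgx)]

lemma Pf_at_rho {a b ρ : ℝ} (hg : gf a ρ = 0) : Pf a b ρ = 16*ρ^2*(5*ρ^4 + ρ^2 - b) := by
  unfold gf at hg
  unfold Pf
  linear_combination (a - 36*ρ^3 + 6*ρ) * hg

/-- for a < 0 and b < 5ρ⁴+ρ², there is an element of Xset above ρ -/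
lemma exists_Xpos {a b ρ : ℝ} (ha : a < 0) (hρ : 0 < ρ) (hρa : ρ < -a) (hg : gf a ρ = 0)
    (hb : b < 5*ρ^4 + ρ^2) : ∃ x ∈ Xset a b, ρ < x := by
  set M := 2 + |a| + |b| with hMdef
  have hMpos : 0 < M := by have := abs_nonneg a; have := abs_nonneg b; linarith
  have hρM : ρ < M := by
    have h2 : |a| = -a := abs_of_neg ha
    have := abs_nonneg b
    linarith
  have hPρ : 0 < Pf a b ρ := by
    rw [Pf_at_rho hg]
    have h5 : 0 < 5*ρ^4 + ρ^2 - b := by linarith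
    positivity
  have hPM : Pf a b M < 0 := Pf_neg_big (by rw [abs_of_pos hMpos])
  obtain ⟨x, hxm, hx⟩ := intermediate_value_Ioo' hρM.le
    ((Pf_continuous a b).continuousOn) ⟨hPM, hPρ⟩
  refine ⟨x, ⟨hx, ?_⟩, hxm.1⟩
  have hxρ : ρ < x := hxm.1
  have hx0 : 0 < x := lt_trans hρ hxρ
  have hfac : 0 < (x - ρ)*(x^2 + x*ρ + ρ^2) := by
    apply mul_pos (by linarith)
    nlinarith [mul_pos hx0 hρ, pow_pos hx0 2, pow_pos hρ 2]
  have hgx : 0 < gf a x := by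
    unfold gf at hg ⊢
    nlinarith [hfac]
  exact mul_pos hx0 hgx

/-- for a < 0 and b ≥ 5ρ⁴+ρ², there are two real roots -/
lemma exists_two_real {a b ρ : ℝ} (ha : a < 0) (hρ : 0 < ρ) (hρa : ρ < -a) (hg : gf a ρ = 0)
    (hb : 5*ρ^4 + ρ^2 ≤ b) :
    ∃ r₁ ∈ Rset a b, ∃ r₂ ∈ Rset a b, r₁ < -ρ ∧ -ρ < r₂ := by
  set M := 2 + |a| + |b| with hMdef
  have hMpos : 0 < M := by have := abs_nonneg a; have := abs_nonneg b; linarith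
  have hρM : ρ < M := by
    have h2 : |a| = -a := abs_of_neg ha
    have := abs_nonneg b
    linarith
  have hcont : Continuous (fun x : ℝ => x^4 - x^2 - a*x - b) := by continuity
  have hqρ : (-ρ)^4 - (-ρ)^2 - a*(-ρ) - b < 0 := by
    unfold gf at hg
    nlinarith [pow_pos hρ 4, pow_pos hρ 2]
  have hq1 : 0 < M^4 - M^2 - a*M - b := qf_pos_big (by rw [abs_of_pos hMpos])
  have hq2 : 0 < (-M)^4 - (-M)^2 - a*(-M) - b := qf_pos_big (by rw [abs_neg, abs_of_pos hMpos])

  obtain ⟨r₁, hr₁m, hr₁⟩ := intermediate_value_Ioo' (by linarith : -M ≤ -ρ)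
    hcont.continuousOn ⟨hqρ, hq2⟩
  obtain ⟨r₂, hr₂m, hr₂⟩ := intermediate_value_Ioo (by linarith : -ρ ≤ M)
    hcont.continuousOn ⟨hqρ, hq1⟩
  exact ⟨r₁, hr₁, r₂, hr₂, hr₁m.2, hr₂m.1⟩

/-- For a = 0 the Xset is contained in a two-element set -/
lemma Xset_zero_sub (b : ℝ) :
    Xset 0 b ⊆ {Real.sqrt ((Real.sqrt (16-16*b) - 2)/8), -Real.sqrt ((Real.sqrt (16-16*b) - 2)/8)} := by
  intro x hx
  obtain ⟨hP, hpos⟩ := hx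
  have hx0 : x ≠ 0 := by rintro rfl; simp [gf] at hpos
  have hx2 : (0:ℝ) < x^2 := by positivity
  have hq : 16*x^4 + 8*x^2 + 4*b - 3 = 0 := by
    have h4 : (-4*x^2 : ℝ) ≠ 0 := by positivity
    apply mul_left_cancel₀ h4
    unfold Pf at hP
    linear_combination hP
  have hs : (8*x^2+2)^2 = 16-16*b := by linear_combination (4:ℝ) * hq
  have hsq : Real.sqrt (16-16*b) = 8*x^2+2 := by
    rw [← hs]
    exact Real.sqrt_sq (by positivity)
  have hxu : x^2 = (Real.sqrt (16-16*b) - 2)/8 := by rw [hsq]; ring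
  have habs : Real.sqrt ((Real.sqrt (16-16*b) - 2)/8) = |x| := by
    rw [← hxu, Real.sqrt_sq_eq_abs]
  rcases abs_cases x with ⟨hc, _⟩ | ⟨hc, _⟩
  · left; rw [habs, hc]
  · right; rw [habs, hc]; simp

/-- Vset is always contained in a two-element set -/
lemma Vset_sub (a b : ℝ) :
    Vset a b ⊆ {Real.sqrt ((Real.sqrt (1+4*b) - 1)/2), -Real.sqrt ((Real.sqrt (1+4*b) - 1)/2)} := by
  rintro y ⟨hy0, _, hb⟩
  have hs : (2*y^2+1)^2 = 1+4*b := by linear_combination (4:ℝ) * hb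
  have hsq : Real.sqrt (1+4*b) = 2*y^2+1 := by
    rw [← hs]; exact Real.sqrt_sq (by positivity)
  have hyu : y^2 = (Real.sqrt (1+4*b) - 1)/2 := by rw [hsq]; ring
  have habs : Real.sqrt ((Real.sqrt (1+4*b) - 1)/2) = |y| := by
    rw [← hyu, Real.sqrt_sq_eq_abs]
  rcases abs_cases y with ⟨hc, _⟩ | ⟨hc, _⟩
  · left; rw [habs, hc]
  · right; rw [habs, hc]; simp

lemma Vset_finite (a b : ℝ) : (Vset a b).Finite :=
  Set.Finite.subset (Set.toFinite _) (Vset_sub a b)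

lemma Vset_ncard (a b : ℝ) : (Vset a b).ncard ≤ 2 := by
  refine le_trans (Set.ncard_le_ncard (Vset_sub a b) (Set.toFinite _)) ?_
  refine le_trans (Set.ncard_insert_le _ _) ?_
  simp

lemma Xset_zero_ncard (b : ℝ) : (Xset 0 b).ncard ≤ 2 := by
  refine le_trans (Set.ncard_le_ncard (Xset_zero_sub b) (Set.toFinite _)) ?_
  refine le_trans (Set.ncard_insert_le _ _) ?_
  simp

lemma Vset_empty {a b : ℝ} (ha : a ≠ 0) : Vset a b = ∅ := by
  ext y; simp only [Vset, Set.mem_setOf_eq, Set.mem_empty_iff_false, iff_false]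
  rintro ⟨_, h, _⟩; exact ha h

/-- lower-bound elements for a = 0, b < 3/4 -/
lemma exists_X_zero {b : ℝ} (hb : b < 3/4) :
    ∃ x > 0, x ∈ Xset 0 b ∧ -x ∈ Xset 0 b := by
  set s := Real.sqrt (16-16*b) with hsdef
  have h16 : (0:ℝ) < 16-16*b := by linarith
  have hs2 : s^2 = 16-16*b := Real.sq_sqrt h16.le
  have hs0 : 0 ≤ s := Real.sqrt_nonneg _
  have hsgt : 2 < s := by nlinarith
  set u := (s-2)/8 with hudef
  have hu : 0 < u := by rw [hudef]; linarith
  set x := Real.sqrt u with hxdef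
  have hx : 0 < x := Real.sqrt_pos.2 hu
  have hx2 : x^2 = u := Real.sq_sqrt hu.le
  have hquart : 16*u^2 + 8*u + 4*b - 3 = 0 := by
    rw [hudef]
    linear_combination (1/4 : ℝ) * hs2
  have hPx : Pf 0 b x = 0 := by
    unfold Pf
    linear_combination (-64*(x^4+x^2*u+u^2) - 32*(x^2+u) + (12-16*b)) * hx2 + (-4*u) * hquart
  have hPnx : Pf 0 b (-x) = 0 := by
    have : Pf 0 b (-x) = Pf 0 b x := by unfold Pf; ring
    rw [this]; exact hPx
  refine ⟨x, hx, ⟨hPx, ?_⟩, ⟨hPnx, ?_⟩⟩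
  · unfold gf
    nlinarith [pow_pos hx 4, pow_pos hx 2]
  · unfold gf
    nlinarith [pow_pos hx 4, pow_pos hx 2]

/-- lower-bound elements for a = 0, b ≥ 3/4: Vset elements -/
lemma exists_V_zero {b : ℝ} (hb : 3/4 ≤ b) :
    ∃ y > 0, y ∈ Vset 0 b ∧ -y ∈ Vset 0 b := by
  set s := Real.sqrt (1+4*b) with hsdef
  have h14 : (0:ℝ) < 1+4*b := by linarith
  have hs2 : s^2 = 1+4*b := Real.sq_sqrt h14.le
  have hs0 : 0 ≤ s := Real.sqrt_nonneg _
  have hsgt : 1 < s := by nlinarith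
  set v := (s-1)/2 with hvdef
  have hv : 0 < v := by rw [hvdef]; linarith
  set y := Real.sqrt v with hydef
  have hy : 0 < y := Real.sqrt_pos.2 hv
  have hy2 : y^2 = v := Real.sq_sqrt hv.le
  have hq : v^2 + v - b = 0 := by
    rw [hvdef]
    linear_combination (1/4 : ℝ) * hs2
  have hyq : y^4 + y^2 - b = 0 := by
    have h4 : y^4 = v^2 := by rw [← hy2]; ring
    rw [h4, hy2]; exact hq
  have hynq : (-y)^4 + (-y)^2 - b = 0 := by
    have : (-y)^4 + (-y)^2 - b = y^4 + y^2 - b := by ring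
    rw [this]; exact hyq
  exact ⟨y, hy, ⟨hy.ne', rfl, hyq⟩, ⟨(neg_ne_zero.2 hy.ne'), rfl, hynq⟩⟩

/-- lower-bound real roots for a = 0, b ≥ 3/4 -/
lemma exists_two_real_zero {b : ℝ} (hb : 3/4 ≤ b) :
    ∃ r₁ ∈ Rset 0 b, ∃ r₂ ∈ Rset 0 b, r₁ < 0 ∧ 0 < r₂ := by
  set M := 2 + |b| with hMdef
  have hMpos : 0 < M := by have := abs_nonneg b; linarith
  have hcont : Continuous (fun x : ℝ => x^4 - x^2 - (0:ℝ)*x - b) := by continuity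
  have hq0 : (0:ℝ)^4 - (0:ℝ)^2 - (0:ℝ)*0 - b < 0 := by norm_num; linarith
  have habs : 2 + |(0:ℝ)| + |b| ≤ |M| := by
    rw [abs_of_pos hMpos]; simp [hMdef]
  have hq1 : 0 < M^4 - M^2 - (0:ℝ)*M - b := qf_pos_big habs
  have hq2 : 0 < (-M)^4 - (-M)^2 - (0:ℝ)*(-M) - b := qf_pos_big (by rwa [abs_neg])
  obtain ⟨r₁, hr₁m, hr₁⟩ := intermediate_value_Ioo' (by linarith : -M ≤ (0:ℝ))
    hcont.continuousOn ⟨hq0, hq2⟩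
  obtain ⟨r₂, hr₂m, hr₂⟩ := intermediate_value_Ioo (by linarith : (0:ℝ) ≤ M)
    hcont.continuousOn ⟨hq0, hq1⟩
  exact ⟨r₁, hr₁, r₂, hr₂, hr₁m.2, hr₂m.1⟩


lemma mk_ne_of_re {x y x' y' : ℝ} (h : x ≠ x') : (⟨x,y⟩:ℂ) ≠ ⟨x',y'⟩ :=
  fun hc => h (congrArg Complex.re hc)

lemma mk_ne_of_im {x y x' y' : ℝ} (h : y ≠ y') : (⟨x,y⟩:ℂ) ≠ ⟨x',y'⟩ :=
  fun hc => h (congrArg Complex.im hc)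

lemma four_le_ncard {s : Set ℂ} (hs : s.Finite) {z₁ z₂ z₃ z₄ : ℂ}
    (m₁ : z₁ ∈ s) (m₂ : z₂ ∈ s) (m₃ : z₃ ∈ s) (m₄ : z₄ ∈ s)
    (h₁₂ : z₁ ≠ z₂) (h₁₃ : z₁ ≠ z₃) (h₁₄ : z₁ ≠ z₄)
    (h₂₃ : z₂ ≠ z₃) (h₂₄ : z₂ ≠ z₄) (h₃₄ : z₃ ≠ z₄) : 4 ≤ s.ncard := by
  have hsub : ({z₁, z₂, z₃, z₄} : Set ℂ) ⊆ s := by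
    intro z hz
    rcases hz with rfl | rfl | rfl | rfl
    · exact m₁
    · exact m₂
    · exact m₃
    · exact m₄
  have hcard : ({z₁, z₂, z₃, z₄} : Set ℂ).ncard = 4 := by
    rw [Set.ncard_insert_of_notMem (by simp [h₁₂, h₁₃, h₁₄]),
        Set.ncard_insert_of_notMem (by simp [h₂₃, h₂₄]),
        Set.ncard_pair h₃₄]
  calc 4 = ({z₁, z₂, z₃, z₄} : Set ℂ).ncard := hcard.symm
    _ ≤ s.ncard := Set.ncard_le_ncard hsub hs

lemma sol_finite (a b : ℝ) : (sol a b).Finite := by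
  apply Set.Finite.subset _ (sol_subset a b)
  exact ((((Rset_finite a b).image _).union ((Xset_finite a b).image _)).union
    ((Xset_finite a b).image _)).union ((Vset_finite a b).image _)

lemma sol_ncard_le (a b : ℝ) (hX : (Xset a b).ncard ≤ 3) (hV : (Vset a b).ncard ≤ 2)
    (hXV : (Xset a b).ncard + (Xset a b).ncard + (Vset a b).ncard ≤ 6) :
    (sol a b).ncard ≤ 10 := by
  have h1 : (sol a b).ncard ≤
      (((fun x : ℝ => (x:ℂ)) '' Rset a b) ∪
      ((fun x : ℝ => (⟨x, Real.sqrt (tf a x)⟩ : ℂ)) '' Xset a b) ∪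
      ((fun x : ℝ => (⟨x, -Real.sqrt (tf a x)⟩ : ℂ)) '' Xset a b) ∪
      ((fun y : ℝ => (⟨0, y⟩ : ℂ)) '' Vset a b)).ncard := by
    exact Set.ncard_le_ncard (sol_subset a b)
      (((((Rset_finite a b).image _).union ((Xset_finite a b).image _)).union
      ((Xset_finite a b).image _)).union ((Vset_finite a b).image _))
  have h2 := Set.ncard_union_le
      (((fun x : ℝ => (x:ℂ)) '' Rset a b) ∪
      ((fun x : ℝ => (⟨x, Real.sqrt (tf a x)⟩ : ℂ)) '' Xset a b) ∪
      ((fun x : ℝ => (⟨x, -Real.sqrt (tf a x)⟩ : ℂ)) '' Xset a b))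
      ((fun y : ℝ => (⟨0, y⟩ : ℂ)) '' Vset a b)
  have h3 := Set.ncard_union_le
      (((fun x : ℝ => (x:ℂ)) '' Rset a b) ∪
      ((fun x : ℝ => (⟨x, Real.sqrt (tf a x)⟩ : ℂ)) '' Xset a b))
      ((fun x : ℝ => (⟨x, -Real.sqrt (tf a x)⟩ : ℂ)) '' Xset a b)
  have h4 := Set.ncard_union_le
      ((fun x : ℝ => (x:ℂ)) '' Rset a b)
      ((fun x : ℝ => (⟨x, Real.sqrt (tf a x)⟩ : ℂ)) '' Xset a b)
  have i1 : ((fun x : ℝ => (x:ℂ)) '' Rset a b).ncard ≤ 4 :=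
    le_trans (Set.ncard_image_le (Rset_finite a b)) (Rset_ncard a b)
  have i2 : ((fun x : ℝ => (⟨x, Real.sqrt (tf a x)⟩ : ℂ)) '' Xset a b).ncard ≤ (Xset a b).ncard :=
    Set.ncard_image_le (Xset_finite a b)
  have i3 : ((fun x : ℝ => (⟨x, -Real.sqrt (tf a x)⟩ : ℂ)) '' Xset a b).ncard ≤ (Xset a b).ncard :=
    Set.ncard_image_le (Xset_finite a b)
  have i4 : ((fun y : ℝ => (⟨0, y⟩ : ℂ)) '' Vset a b).ncard ≤ (Vset a b).ncard :=
    Set.ncard_image_le (Vset_finite a b)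
  omega

/-- main result for a < 0 -/
lemma main_neg {a b : ℝ} (ha : a < 0) :
    (sol a b).Finite ∧ 4 ≤ (sol a b).ncard ∧ (sol a b).ncard ≤ 10 := by
  obtain ⟨ρ, hρ0, hρa, hgρ⟩ := exists_rho ha
  refine ⟨sol_finite a b, ?_, ?_⟩
  · -- lower bound
    obtain ⟨x₁, hx₁X, hx₁n⟩ := exists_Xneg (b := b) ha
    obtain ⟨hz₁, hz₁', hy₁, _⟩ := mem_sol_of_X hx₁X
    rcases lt_or_ge b (5*ρ^4 + ρ^2) with hb | hb
    · obtain ⟨x₂, hx₂X, hx₂p⟩ := exists_Xpos ha hρ0 hρa hgρ hb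
      obtain ⟨hz₂, hz₂', hy₂, _⟩ := mem_sol_of_X hx₂X
      have hx12 : x₁ ≠ x₂ := by intro h; subst h; linarith
      exact four_le_ncard (sol_finite a b) hz₁ hz₁' hz₂ hz₂'
        (mk_ne_of_im (by linarith)) (mk_ne_of_re hx12) (mk_ne_of_re hx12)
        (mk_ne_of_re hx12) (mk_ne_of_re hx12) (mk_ne_of_im (by linarith))
    · obtain ⟨r₁, hr₁R, r₂, hr₂R, hr₁, hr₂⟩ := exists_two_real ha hρ0 hρa hgρ hb
      have hR1 := mem_sol_of_R hr₁R
      have hR2 := mem_sol_of_R hr₂R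
      have him1 : ((r₁:ℝ):ℂ) = (⟨r₁, 0⟩ : ℂ) := Complex.ext rfl rfl
      have him2 : ((r₂:ℝ):ℂ) = (⟨r₂, 0⟩ : ℂ) := Complex.ext rfl rfl
      rw [him1] at hR1
      rw [him2] at hR2
      exact four_le_ncard (sol_finite a b) hz₁ hz₁' hR1 hR2
        (mk_ne_of_im (by linarith)) (mk_ne_of_im (by linarith)) (mk_ne_of_im (by linarith))
        (mk_ne_of_im (by linarith)) (mk_ne_of_im (by linarith)) (mk_ne_of_re (by linarith))
  · -- upper bound
    have hX := Xset_ncard_le_three (b := b) ha hρ0 hgρ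
    have hV : (Vset a b).ncard = 0 := by rw [Vset_empty ha.ne]; simp
    exact sol_ncard_le a b hX (by omega) (by omega)

/-- main result for a = 0 -/
lemma main_zero (b : ℝ) :
    (sol 0 b).Finite ∧ 4 ≤ (sol 0 b).ncard ∧ (sol 0 b).ncard ≤ 10 := by
  refine ⟨sol_finite 0 b, ?_, ?_⟩
  · rcases lt_or_ge b (3/4) with hb | hb
    · obtain ⟨x, hx, hX1, hX2⟩ := exists_X_zero hb
      obtain ⟨hz₁, hz₁', hy₁, _⟩ := mem_sol_of_X hX1
      obtain ⟨hz₂, hz₂', hy₂, _⟩ := mem_sol_of_X hX2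
      have hx12 : x ≠ -x := by intro h; linarith [h ▸ hx]
      exact four_le_ncard (sol_finite 0 b) hz₁ hz₁' hz₂ hz₂'
        (mk_ne_of_im (by linarith)) (mk_ne_of_re hx12) (mk_ne_of_re hx12)
        (mk_ne_of_re hx12) (mk_ne_of_re hx12) (mk_ne_of_im (by linarith))
    · obtain ⟨y, hy, hV1, hV2⟩ := exists_V_zero hb
      obtain ⟨r₁, hr₁R, r₂, hr₂R, hr₁, hr₂⟩ := exists_two_real_zero hb
      have hz₁ := mem_sol_of_V hV1
      have hz₂ := mem_sol_of_V hV2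
      have hR1 := mem_sol_of_R hr₁R
      have hR2 := mem_sol_of_R hr₂R
      have him1 : ((r₁:ℝ):ℂ) = (⟨r₁, 0⟩ : ℂ) := Complex.ext rfl rfl
      have him2 : ((r₂:ℝ):ℂ) = (⟨r₂, 0⟩ : ℂ) := Complex.ext rfl rfl
      rw [him1] at hR1
      rw [him2] at hR2
      exact four_le_ncard (sol_finite 0 b) hz₁ hz₂ hR1 hR2
        (mk_ne_of_im (by linarith)) (mk_ne_of_im (by linarith)) (mk_ne_of_im (by linarith))
        (mk_ne_of_im (by linarith)) (mk_ne_of_im (by linarith)) (mk_ne_of_re (by linarith))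
  · have hX := Xset_zero_ncard b
    have hV := Vset_ncard 0 b
    exact sol_ncard_le 0 b (by omega) hV (by omega)

/-- symmetry: z ↦ -z identifies sol a b with sol (-a) b -/
lemma sol_neg_image (a b : ℝ) : sol a b = (fun z : ℂ => -z) '' sol (-a) b := by
  ext z
  constructor
  · intro hz
    refine ⟨-z, ?_, by simp⟩
    simp only [sol, Set.mem_setOf_eq] at hz ⊢
    push_cast
    rw [map_neg]
    linear_combination hz
  · rintro ⟨w, hw, rfl⟩
    simp only [sol, Set.mem_setOf_eq] at hw ⊢
    push_cast at hw ⊢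
    rw [map_neg]
    linear_combination hw

end Stmt12
end

open Stmt12 in
/-- for all real `a, b`, the solution set of
`conj z ^ 4 = z ^ 2 + a z + b` is finite with between 4 and 10 elements. -/
theorem stmt_12 (a b : ℝ) :
    {z : ℂ | (starRingEnd ℂ z) ^ 4 = z ^ 2 + (a : ℂ) * z + (b : ℂ)}.Finite ∧
      4 ≤ {z : ℂ | (starRingEnd ℂ z) ^ 4 = z ^ 2 + (a : ℂ) * z + (b : ℂ)}.ncard ∧
      {z : ℂ | (starRingEnd ℂ z) ^ 4 = z ^ 2 + (a : ℂ) * z + (b : ℂ)}.ncard ≤ 10 := by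
  have hset : {z : ℂ | (starRingEnd ℂ z) ^ 4 = z ^ 2 + (a : ℂ) * z + (b : ℂ)} = sol a b := rfl
  rw [hset]
  rcases lt_trichotomy a 0 with ha | ha | ha
  · exact main_neg ha
  · subst ha; exact main_zero b
  · have hneg : -a < 0 := by linarith
    have h := main_neg (a := -a) (b := b) hneg
    have himg : sol a b = (fun z : ℂ => -z) '' sol (-a) b := sol_neg_image a b
    rw [himg]
    refine ⟨h.1.image _, ?_, ?_⟩
    · rw [Set.ncard_image_of_injective _ neg_injective]
      exact h.2.1
    · rw [Set.ncard_image_of_injective _ neg_injective]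
      exact h.2.2
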